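/- arXiv:1806.00584 — 2 statements merged into one kernel-verified Lean document; each statement's English description precedes it below -/
import Mathlib

section
/- Let T be a junction tree and let C_j and C be adjacent nodes of T with separator S = C_j ∩ C. Suppose a node C̃_j of T satisfies S ⊆ C̃_j ∩ C_j. Then the tree obtained from T by replacing the edge (C, C_j) with the edge (C, C̃_j) is still a tree and still satisfies the junction tree property. -/
open SimpleGraph

/-- Convert a walk in `G` avoiding-or-detouring the edge `s(c, j)` into a walk in `G'`,
preserving a vertex predicate `V` on the support. -/
lemma convertWalk {ι : Type*} {G G' : SimpleGraph ι} {c j t : ι} {V : ι → Prop}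
    (he : ∀ ⦃a b : ι⦄, G.Adj a b → s(a, b) ≠ s(c, j) → G'.Adj a b)
    (hct : G'.Adj c t) (q : G'.Walk t j)
    (hq : V c → V j → ∀ D ∈ q.support, V D) :
    ∀ {A B : ι} (w : G.Walk A B), (∀ D ∈ w.support, V D) →
      ∃ w' : G'.Walk A B, ∀ D ∈ w'.support, V D := by
  intro A B w
  induction w with
  | nil => exact fun h => ⟨.nil, h⟩
  | @cons u v B h p ih =>
    intro hsup
    have hu : V u := hsup u (by simp)
    have hps : ∀ D ∈ p.support, V D := fun D hD => hsup D (by simp [hD])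
    obtain ⟨p', hp'⟩ := ih hps
    by_cases hcj : s(u, v) = s(c, j)
    · rw [Sym2.eq_iff] at hcj
      rcases hcj with ⟨rfl, rfl⟩ | ⟨rfl, rfl⟩
      · -- step is c → j
        have hv : V v := hps v p.start_mem_support
        have hqs := hq hu hv
        refine ⟨(SimpleGraph.Walk.cons hct q).append p', ?_⟩
        intro D hD
        rw [SimpleGraph.Walk.mem_support_append_iff] at hD
        rcases hD with hD | hD
        · rw [SimpleGraph.Walk.support_cons, List.mem_cons] at hD
          rcases hD with rfl | hD
          · exact hu
          · exact hqs D hD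
        · exact hp' D hD
      · -- step is j → c
        have hv : V v := hps v p.start_mem_support
        have hqs := hq hv hu
        refine ⟨(SimpleGraph.Walk.cons hct q).reverse.append p', ?_⟩
        intro D hD
        rw [SimpleGraph.Walk.mem_support_append_iff] at hD
        rcases hD with hD | hD
        · rw [SimpleGraph.Walk.support_reverse, List.mem_reverse,
            SimpleGraph.Walk.support_cons, List.mem_cons] at hD
          rcases hD with rfl | hD
          · exact hv
          · exact hqs D hD
        · exact hp' D hD
    · refine ⟨SimpleGraph.Walk.cons (he h hcj) p', ?_⟩
      intro D hD
      rw [SimpleGraph.Walk.support_cons, List.mem_cons] at hD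
      rcases hD with rfl | hD
      · exact hu
      · exact hp' D hD

/-- Moving a neighbor in a junction tree: if `(c, j)` is an edge with separator
`C c ∩ C j` contained in `C t ∩ C j`, and `t ≠ c` lies in the component of `j`
after deleting the edge, then replacing edge `(c, j)` by `(c, t)` again yields a
tree satisfying the junction tree property. -/
theorem stmt4 {ι β : Type*} [Fintype ι] (G : SimpleGraph ι) (hG : G.IsTree)
    (C : ι → Set β)
    (hJT : ∀ (A B : ι) (p : G.Walk A B), p.IsPath → ∀ D ∈ p.support, C A ∩ C B ⊆ C D)
    (c j t : ι) (hadj : G.Adj c j) (htc : t ≠ c)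
    (hsep : C c ∩ C j ⊆ C t ∩ C j)
    (hreach : (G.deleteEdges {s(c, j)}).Reachable j t) :
    (SimpleGraph.fromEdgeSet ((G.edgeSet \ {s(c, j)}) ∪ {s(c, t)})).IsTree ∧
      ∀ (A B : ι) (p : (SimpleGraph.fromEdgeSet
            ((G.edgeSet \ {s(c, j)}) ∪ {s(c, t)})).Walk A B),
        p.IsPath → ∀ D ∈ p.support, C A ∩ C B ⊆ C D := by
  classical
  set G' : SimpleGraph ι :=
    SimpleGraph.fromEdgeSet ((G.edgeSet \ {s(c, j)}) ∪ {s(c, t)}) with hG'def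
  set Gd : SimpleGraph ι := G.deleteEdges {s(c, j)} with hGddef
  -- basic edge-set facts
  have hGdE : Gd.edgeSet = G.edgeSet \ {s(c, j)} := G.edgeSet_deleteEdges _
  have hG'E : G'.edgeSet = ((G.edgeSet \ {s(c, j)}) ∪ {s(c, t)}) \ {e | e.IsDiag} :=
    SimpleGraph.edgeSet_fromEdgeSet _
  have he : ∀ ⦃a b : ι⦄, G.Adj a b → s(a, b) ≠ s(c, j) → G'.Adj a b := by
    intro a b hab hne
    exact (SimpleGraph.fromEdgeSet_adj _).mpr ⟨Or.inl ⟨G.mem_edgeSet.mpr hab, hne⟩, hab.ne⟩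
  have hct : G'.Adj c t :=
    (SimpleGraph.fromEdgeSet_adj _).mpr ⟨Or.inr rfl, htc.symm⟩
  have hGd_le_G' : ∀ g ∈ Gd.edgeSet, g ∈ G'.edgeSet := by
    intro g hg
    rw [hGdE] at hg
    rw [hG'E]
    refine ⟨Or.inl hg, ?_⟩
    exact SimpleGraph.not_isDiag_of_mem_edgeSet G hg.1
  -- the detour path from t to j
  have hreach2 := hreach
  obtain ⟨w0⟩ := hreach2
  set p0 : Gd.Walk t j := w0.reverse.bypass with hp0def
  have hp0 : p0.IsPath := SimpleGraph.Walk.bypass_isPath _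
  set q : G'.Walk t j := p0.transfer G' (fun g hg => hGd_le_G' g (p0.edges_subset_edgeSet hg))
    with hqdef
  set p1 : G.Walk t j := p0.transfer G
      (fun g hg => ((hGdE ▸ p0.edges_subset_edgeSet hg) : g ∈ G.edgeSet \ _).1) with hp1def
  have hp1 : p1.IsPath := hp0.transfer _
  have hqsupp : q.support = p1.support := by
    rw [hqdef, hp1def, SimpleGraph.Walk.support_transfer, SimpleGraph.Walk.support_transfer]
  -- connectivity of G'
  have hconn : G'.Connected := by
    have hne : Nonempty ι := hG.isConnected.nonempty
    refine SimpleGraph.Connected.mk ?_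
    intro u v
    obtain ⟨w⟩ := hG.isConnected.preconnected u v
    obtain ⟨w', -⟩ := convertWalk (V := fun _ => True) he hct q
      (fun _ _ D _ => trivial) w (fun D _ => trivial)
    exact ⟨w'⟩
  -- acyclicity of G'
  have hbr_e : ¬ Gd.Reachable c j := by
    have hb : G.IsBridge s(c, j) :=
      (SimpleGraph.isAcyclic_iff_forall_adj_isBridge.mp hG.IsAcyclic) hadj
    exact SimpleGraph.isBridge_iff.mp hb
  have h1 : ¬ Gd.Reachable c t := by
    intro r
    exact hbr_e (r.trans (SimpleGraph.Reachable.symm hreach))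
  have hbr_f : ¬ (G'.deleteEdges {s(c, t)}).Reachable c t := by
    intro r
    obtain ⟨w⟩ := r
    refine h1 ⟨w.transfer Gd ?_⟩
    intro g hg
    have h2 := w.edges_subset_edgeSet hg
    rw [SimpleGraph.edgeSet_deleteEdges, hG'E] at h2
    obtain ⟨⟨hg1, -⟩, hg2⟩ := h2
    rw [hGdE]
    rcases hg1 with hg1 | hg1
    · exact hg1
    · exact absurd hg1 hg2
  have hacy : G'.IsAcyclic := by
    intro v W hW
    by_cases hf : s(c, t) ∈ W.edges
    · have hbridge : G'.IsBridge s(c, t) :=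
        SimpleGraph.isBridge_iff.mpr hbr_f
      exact ((SimpleGraph.isBridge_iff_adj_and_forall_cycle_notMem hct).mp hbridge) W hW hf
    · have hsub : ∀ g ∈ W.edges, g ∈ G.edgeSet := by
        intro g hg
        have h2 := W.edges_subset_edgeSet hg
        rw [hG'E] at h2
        obtain ⟨hg1, -⟩ := h2
        rcases hg1 with hg1 | hg1
        · exact hg1.1
        · exact absurd (hg1 ▸ hg) hf
      exact hG.IsAcyclic (W.transfer G hsub) (hW.transfer hsub)
  have htree : G'.IsTree := ⟨hconn, hacy⟩
  refine ⟨htree, ?_⟩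
  -- junction tree property
  intro A B p hp D hD x hx
  obtain ⟨pg, hpgPath, -⟩ := hG.existsUnique_path A B
  have hVg : ∀ D' ∈ pg.support, x ∈ C D' := fun D' hD' => hJT A B pg hpgPath D' hD' hx
  have hq : x ∈ C c → x ∈ C j → ∀ D' ∈ q.support, x ∈ C D' := by
    intro hc hj D' hD'
    have hx' : x ∈ C t ∩ C j := hsep ⟨hc, hj⟩
    rw [hqsupp] at hD'
    exact hJT t j p1 hp1 D' hD' hx'
  obtain ⟨w', hw'⟩ := convertWalk (V := fun D' => x ∈ C D') he hct q hq pg hVg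
  obtain ⟨P, -, hUniq⟩ := htree.existsUnique_path A B
  have hpb : p = w'.bypass :=
    (hUniq p hp).trans (hUniq w'.bypass (SimpleGraph.Walk.bypass_isPath _)).symm
  exact hw' D (w'.support_bypass_subset (hpb ▸ hD))
end

section
/- Let T be a junction tree, and let T' be a subtree of T with nodes C₁, …, C_k (k ≥ 2). For each j, let S_j be the union of the separators C_j ∩ C over neighbors C of C_j in T'. For a new vertex v not in any node of T, define new nodes C̃_j = R_j ∪ {v} where S_j ⊆ R_j ⊆ C_j. Then for any path (C̃_{r_1}, …, C̃_{r_m}) along the replicated subtree structure, ⋂_{i=1}^m C̃_{r_i} = (⋂_{i=1}^m C_{r_i}) ∪ {v}. -/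
lemma stmt8_nbr {ι : Type*} (G : SimpleGraph ι) {a b : ι} (p : G.Walk a b)
    (hlen : 1 ≤ p.length) : ∀ i ∈ p.support, ∃ j ∈ p.support, G.Adj i j := by
  induction p with
  | nil => simp at hlen
  | @cons u c w h q ih =>
    intro i hi
    rw [SimpleGraph.Walk.support_cons, List.mem_cons] at hi
    rcases hi with rfl | hi
    · exact ⟨c, by simp [q.start_mem_support], h⟩
    · rcases Nat.eq_zero_or_pos q.length with h0 | h1
      · have := (SimpleGraph.Walk.eq_of_length_eq_zero h0)
        subst this
        rw [SimpleGraph.Walk.nil_iff_eq_nil.mp (SimpleGraph.Walk.length_eq_zero_iff.mp h0)] at hi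
        rw [SimpleGraph.Walk.support_nil, List.mem_singleton] at hi
        subst hi
        exact ⟨u, by simp, h.symm⟩
      · obtain ⟨j, hj, hadj⟩ := ih h1 i hi
        exact ⟨j, by simp [hj], hadj⟩

/-- Let `T` be a junction tree, `V'` the node set of a connected subtree `T'` with
at least two nodes, and for each node `i ∈ V'` let `S i` be the union of the
separators of `i` with its neighbors in `T'`. For a new vertex `v` belonging to no
node, form new nodes `R i ∪ {v}` with `S i ⊆ R i ⊆ C i`. Then along any path of
the subtree, the intersection of the new nodes equals the intersection of the old
nodes with `v` adjoined. -/
theorem stmt8 {ι β : Type*} [Fintype ι] (G : SimpleGraph ι) (hG : G.IsTree)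
    (C : ι → Set β)
    (hJT : ∀ (A B : ι) (p : G.Walk A B), p.IsPath → ∀ D ∈ p.support, C A ∩ C B ⊆ C D)
    (V' : Set ι) (hconn : (G.induce V').Connected) (hcard : 2 ≤ Nat.card V')
    (v : β) (hv : ∀ i, v ∉ C i)
    (R : ι → Set β)
    (hR : ∀ i ∈ V',
      (⋃ j ∈ {j | j ∈ V' ∧ G.Adj i j}, (C i ∩ C j)) ⊆ R i ∧ R i ⊆ C i)
    (a b : ι) (p : G.Walk a b) (hp : p.IsPath) (hlen : 1 ≤ p.length)
    (hsupp : ∀ i ∈ p.support, i ∈ V') :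
    (⋂ i ∈ p.support, (R i ∪ {v})) = (⋂ i ∈ p.support, C i) ∪ {v} := by
  ext x
  simp only [Set.mem_iInter, Set.mem_union, Set.mem_singleton_iff]
  constructor
  · intro hx
    by_cases hxv : x = v
    · exact Or.inr hxv
    · left
      intro i hi
      rcases hx i hi with h | h
      · exact (hR i (hsupp i hi)).2 h
      · exact absurd h hxv
  · rintro (hx | rfl)
    · intro i hi
      left
      obtain ⟨j, hj, hadj⟩ := stmt8_nbr G p hlen i hi
      apply (hR i (hsupp i hi)).1
      refine Set.mem_biUnion (show j ∈ {j | j ∈ V' ∧ G.Adj i j} from ⟨hsupp j hj, hadj⟩) ?_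
      exact ⟨hx i hi, hx j hj⟩
    · intro i _
      exact Or.inr rfl
end
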